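/- Let A be a subset of an abelian group, P* ⊆ A − A, and suppose Σ_{s ∈ P*} |A_s| = η|A|² for some η ∈ (0,1], where A_s = A ∩ (A − s). Then Σ_{s ∈ P*} |A + A_s| ≥ η²|A|⁶ / E₃⁺(A), where E₃⁺(A) = Σ_x r_{A−A}(x)³. -/

import Mathlib

open Finset Pointwise

theorem aux19 {G : Type*} [AddCommGroup G] [DecidableEq G] (A P : Finset G) (B : G → Finset G)
    (hBA : ∀ s, B s ⊆ A) (hBs : ∀ s, ∀ b ∈ B s, b + s ∈ A)
    (η : ℝ)
    (hsum : (∑ s ∈ P, ((B s).card : ℝ)) = η * (A.card : ℝ)^2) :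
    η^2 * (A.card : ℝ)^6 /
        (((((A ×ˢ A) ×ˢ (A ×ˢ A) ×ˢ (A ×ˢ A)).filter
          (fun q => q.1.1 - q.1.2 = q.2.1.1 - q.2.1.2 ∧
            q.1.1 - q.1.2 = q.2.2.1 - q.2.2.2)).card : ℝ)) ≤
      ∑ s ∈ P, ((A + B s).card : ℝ) := by
  classical
  set T := ((((A ×ˢ A) ×ˢ (A ×ˢ A) ×ˢ (A ×ˢ A)).filter
          (fun q : (G × G) × (G × G) × (G × G) => q.1.1 - q.1.2 = q.2.1.1 - q.2.1.2 ∧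
            q.1.1 - q.1.2 = q.2.2.1 - q.2.2.2))) with hT
  set σ : G → G → ℕ := fun s x => ((A ×ˢ B s).filter (fun p => p.1 + p.2 = x)).card with hσ
  -- mass
  have hmass : ∀ s, ∑ x ∈ A + A, (σ s x : ℝ) = (A.card : ℝ) * ((B s).card : ℝ) := by
    intro s
    have h1 : (A ×ˢ B s).card = ∑ x ∈ A + A, σ s x := by
      apply card_eq_sum_card_fiberwise
      rintro ⟨a, b⟩ hab
      rw [mem_coe, mem_product] at hab
      exact add_mem_add hab.1 (hBA s hab.2)
    rw [show ∑ x ∈ A + A, (σ s x : ℝ) = ((∑ x ∈ A + A, σ s x : ℕ) : ℝ) by push_cast; rfl,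
      ← h1, card_product]
    push_cast
    ring
  -- support
  have hsupp : ∀ s x, x ∉ A + B s → σ s x = 0 := by
    intro s x hx
    simp only [hσ, card_eq_zero, filter_eq_empty_iff]
    rintro ⟨a, b⟩ hab h
    rw [mem_product] at hab
    exact hx (h ▸ add_mem_add hab.1 hab.2)
  -- second moment
  have hsq : ∑ s ∈ P, ∑ x ∈ A + A, σ s x ^ 2 ≤ T.card := by
    set Q : G → Finset ((G × G) × (G × G)) := fun s =>
      ((A ×ˢ B s) ×ˢ (A ×ˢ B s)).filter (fun q => q.1.1 + q.1.2 = q.2.1 + q.2.2) with hQ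
    have hQcard : ∀ s, (Q s).card = ∑ x ∈ A + A, σ s x ^ 2 := by
      intro s
      have hmem : ∀ q ∈ Q s, q.1.1 + q.1.2 ∈ A + A := by
        rintro ⟨⟨a, b⟩, a', b'⟩ hq
        simp only [hQ, mem_filter, mem_product] at hq
        exact add_mem_add hq.1.1.1 (hBA s hq.1.1.2)
      rw [card_eq_sum_card_fiberwise hmem]
      refine Finset.sum_congr rfl fun x _ => ?_
      rw [hQ, filter_filter]
      have : (((A ×ˢ B s) ×ˢ (A ×ˢ B s)).filter
          (fun q => (q.1.1 + q.1.2 = q.2.1 + q.2.2) ∧ q.1.1 + q.1.2 = x)) =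
          ((A ×ˢ B s).filter (fun p => p.1 + p.2 = x)) ×ˢ
          ((A ×ˢ B s).filter (fun p => p.1 + p.2 = x)) := by
        rw [← filter_product]
        apply filter_congr
        intro q _
        constructor
        · rintro ⟨h1, h2⟩; exact ⟨h2, h1 ▸ h2⟩
        · rintro ⟨h1, h2⟩; exact ⟨h1.trans h2.symm, h1⟩
      rw [this, card_product, sq]
    have hD : ∑ s ∈ P, (Q s).card = (P.sigma Q).card := (card_sigma P Q).symm
    have hinj : (P.sigma Q).card ≤ T.card := by
      apply card_le_card_of_injOn
        (fun q => ((q.2.1.1, q.2.2.1), ((q.2.2.2, q.2.1.2), (q.2.2.2 + q.1, q.2.1.2 + q.1))))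
      · rintro ⟨s, ⟨a, b⟩, a', b'⟩ hq
        simp only [mem_coe, mem_sigma, hQ, mem_filter, mem_product] at hq
        obtain ⟨hs, ⟨⟨ha, hb⟩, ha', hb'⟩, hadd⟩ := hq
        simp only [mem_coe, hT, mem_filter, mem_product]
        refine ⟨⟨⟨ha, ha'⟩, ⟨hBA s hb', hBA s hb⟩, hBs s b' hb', hBs s b hb⟩, ?_, ?_⟩
        · rw [sub_eq_sub_iff_add_eq_add]
          rw [hadd]; abel
        · rw [sub_eq_sub_iff_add_eq_add]
          rw [show a + (b + s) = a + b + s by abel, hadd]; abel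
      · rintro ⟨s₁, ⟨a₁, b₁⟩, a₁', b₁'⟩ - ⟨s₂, ⟨a₂, b₂⟩, a₂', b₂'⟩ - heq
        simp only [Prod.mk.injEq] at heq
        obtain ⟨⟨ha, ha'⟩, ⟨hb', hb⟩, hbs', hbs⟩ := heq
        subst ha ha' hb' hb
        have hs : s₁ = s₂ := add_left_cancel hbs'
        subst hs
        rfl
    calc ∑ s ∈ P, ∑ x ∈ A + A, σ s x ^ 2 = ∑ s ∈ P, (Q s).card := by
          refine Finset.sum_congr rfl fun s _ => (hQcard s).symm
      _ = (P.sigma Q).card := hD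
      _ ≤ T.card := hinj
  -- Cauchy-Schwarz
  set f : G × G → ℝ := fun p => if p.2 ∈ A + B p.1 then 1 else 0 with hf
  set g : G × G → ℝ := fun p => (σ p.1 p.2 : ℝ) with hg
  have hfg : ∑ p ∈ P ×ˢ (A + A), f p * g p = η * (A.card : ℝ) ^ 3 := by
    rw [Finset.sum_product]
    have : ∀ s ∈ P, ∑ x ∈ A + A, f (s, x) * g (s, x) = (A.card : ℝ) * ((B s).card : ℝ) := by
      intro s _
      rw [← hmass s]
      refine Finset.sum_congr rfl fun x _ => ?_
      simp only [hf, hg]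
      by_cases hx : x ∈ A + B s
      · rw [if_pos hx, one_mul]
      · rw [if_neg hx, zero_mul, hsupp s x hx]; norm_num
    rw [Finset.sum_congr rfl this, ← Finset.mul_sum, hsum]
    ring
  have hf2 : ∑ p ∈ P ×ˢ (A + A), f p ^ 2 = ∑ s ∈ P, ((A + B s).card : ℝ) := by
    rw [Finset.sum_product]
    refine Finset.sum_congr rfl fun s _ => ?_
    have h1 : ∀ x, f (s, x) ^ 2 = if x ∈ A + B s then (1 : ℝ) else 0 := by
      intro x; simp only [hf]; split <;> norm_num
    simp only [h1, Finset.sum_ite_mem]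
    have : (A + A) ∩ (A + B s) = A + B s := by
      rw [inter_eq_right]
      exact add_subset_add_left (hBA s)
    rw [this]
    simp
  have hg2 : ∑ p ∈ P ×ˢ (A + A), g p ^ 2 ≤ (T.card : ℝ) := by
    have : ∑ p ∈ P ×ˢ (A + A), g p ^ 2 = ((∑ s ∈ P, ∑ x ∈ A + A, σ s x ^ 2 : ℕ) : ℝ) := by
      rw [Finset.sum_product]
      push_cast
      rfl
    rw [this]
    exact_mod_cast hsq
  have hCS := sum_mul_sq_le_sq_mul_sq (P ×ˢ (A + A)) f g
  rw [hfg, hf2] at hCS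
  set S := ∑ s ∈ P, ((A + B s).card : ℝ) with hS
  have hS0 : 0 ≤ S := Finset.sum_nonneg fun s _ => by positivity
  have hkey : η ^ 2 * (A.card : ℝ) ^ 6 ≤ S * (T.card : ℝ) := by
    calc η ^ 2 * (A.card : ℝ) ^ 6 = (η * (A.card : ℝ) ^ 3) ^ 2 := by ring
      _ ≤ S * ∑ p ∈ P ×ˢ (A + A), g p ^ 2 := hCS
      _ ≤ S * (T.card : ℝ) := by
          exact mul_le_mul_of_nonneg_left hg2 hS0
  rcases eq_or_lt_of_le (Nat.cast_nonneg T.card : (0:ℝ) ≤ T.card) with hE | hE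
  · rw [← hE, div_zero]; exact hS0
  · rw [div_le_iff₀ hE]; exact hkey

theorem stmt19 {G : Type*} [AddCommGroup G] [DecidableEq G] (A P : Finset G)
    (hP : P ⊆ A - A) (η : ℝ) (hη : 0 < η) (hη1 : η ≤ 1)
    (hsum : (∑ s ∈ P, ((A ∩ A.image (fun a => a - s)).card : ℝ)) = η * (A.card : ℝ)^2) :
    η^2 * (A.card : ℝ)^6 /
        (((((A ×ˢ A) ×ˢ (A ×ˢ A) ×ˢ (A ×ˢ A)).filter
          (fun q => q.1.1 - q.1.2 = q.2.1.1 - q.2.1.2 ∧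
            q.1.1 - q.1.2 = q.2.2.1 - q.2.2.2)).card : ℝ)) ≤
      ∑ s ∈ P, ((A + (A ∩ A.image (fun a => a - s))).card : ℝ) := by
  apply aux19 A P (fun s => A ∩ A.image (fun a => a - s))
    (fun s => inter_subset_left)
    (fun s b hb => by
      obtain ⟨c, hc, hcb⟩ := Finset.mem_image.1 (Finset.mem_inter.1 hb).2
      rw [← hcb, sub_add_cancel]
      exact hc)
    η hsum
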